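/- For every Φ ∈ ℝ^m and every 2N×2N complex matrix ρ, averaging over two independent index tuples yields Σ_{κ, κ' ∈ {1,…,L}^m} (∏_{j=1}^m λ_{κ_j}) · (∏_{j=1}^m λ_{κ'_j}) · U_Φ^{(κ)} · ρ · (U_Φ^{(κ')})† = U_Φ · ρ · U_Φ†. -/

import Mathlib

open Matrix

/-- For an N×N matrix `A`, the 2N×2N block matrix `[[c·I, s·A],[s·A†, −c·I]]`. -/
noncomputable def embedMat (N : ℕ) (c s : ℝ) (A : Matrix (Fin N) (Fin N) ℂ) :
    Matrix (Fin N ⊕ Fin N) (Fin N ⊕ Fin N) ℂ :=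
  Matrix.fromBlocks ((c : ℂ) • 1) ((s : ℂ) • A) ((s : ℂ) • Aᴴ) (-((c : ℂ) • 1))

/-- The unitary `e^{iφ(2Π̃−I)} = [[e^{iφ}·I, 0],[0, e^{−iφ}·I]]`. -/
noncomputable def phasePlus (N : ℕ) (φ : ℝ) : Matrix (Fin N ⊕ Fin N) (Fin N ⊕ Fin N) ℂ :=
  Matrix.fromBlocks (Complex.exp (Complex.I * φ) • 1) 0 0 (Complex.exp (-(Complex.I * φ)) • 1)

/-- The unitary `e^{iφ(2Π−I)} = [[e^{−iφ}·I, 0],[0, e^{iφ}·I]]`. -/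
noncomputable def phaseMinus (N : ℕ) (φ : ℝ) : Matrix (Fin N ⊕ Fin N) (Fin N ⊕ Fin N) ℂ :=
  Matrix.fromBlocks (Complex.exp (-(Complex.I * φ)) • 1) 0 0 (Complex.exp (Complex.I * φ) • 1)

/-- The alternating phase sequence built from matrices `V 0, …, V (m−1)` (1-indexed as
`V_1, …, V_m`): for even `m` it is
`∏_{j=1}^{m/2} (e^{iφ_{2j−1}(2Π−I)}·V_{2j−1}ᴴ·e^{iφ_{2j}(2Π̃−I)}·V_{2j})` and for odd `m` it is
`e^{iφ_1(2Π̃−I)}·V_1·∏_{j=1}^{(m−1)/2} (e^{iφ_{2j}(2Π−I)}·V_{2j}ᴴ·e^{iφ_{2j+1}(2Π̃−I)}·V_{2j+1})`;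
equivalently, the position-`p` factor (for `p = 1,…,m`) is `e^{iφ_p(2Π̃−I)}·V_p` when `m − p`
is even and `e^{iφ_p(2Π−I)}·V_pᴴ` when `m − p` is odd, multiplied left to right. -/
noncomputable def phaseSeq (N m : ℕ) (φ : Fin m → ℝ)
    (V : Fin m → Matrix (Fin N ⊕ Fin N) (Fin N ⊕ Fin N) ℂ) :
    Matrix (Fin N ⊕ Fin N) (Fin N ⊕ Fin N) ℂ :=
  ((List.finRange m).map fun j =>
      if (m - (j.val + 1)) % 2 = 0 then phasePlus N (φ j) * V j
      else phaseMinus N (φ j) * (V j)ᴴ).prod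

lemma phaseSeq_succ (N m : ℕ) (φ : Fin (m+1) → ℝ)
    (V : Fin (m+1) → Matrix (Fin N ⊕ Fin N) (Fin N ⊕ Fin N) ℂ) :
    phaseSeq N (m+1) φ V =
      (if m % 2 = 0 then phasePlus N (φ 0) * V 0
        else phaseMinus N (φ 0) * (V 0)ᴴ) *
      phaseSeq N m (fun j => φ j.succ) (fun j => V j.succ) := by
  simp only [phaseSeq, List.finRange_succ, List.map_cons, List.map_map, List.prod_cons,
    Fin.val_zero, Nat.add_sub_cancel]
  congr 1
  have hfun : ((fun j : Fin (m+1) => if (m + 1 - (j.val + 1)) % 2 = 0 then phasePlus N (φ j) * V j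
        else phaseMinus N (φ j) * (V j)ᴴ) ∘ Fin.succ)
      = fun j : Fin m => if (m - (j.val + 1)) % 2 = 0 then phasePlus N (φ j.succ) * V j.succ
        else phaseMinus N (φ j.succ) * (V j.succ)ᴴ := by
    funext j
    simp [Function.comp, Nat.succ_sub_succ]
  rw [hfun]

lemma key (N L : ℕ) (lam : Fin L → ℝ) (hsum : ∑ k, lam k = 1)
    (M : Fin L → Matrix (Fin N ⊕ Fin N) (Fin N ⊕ Fin N) ℂ) :
    ∀ (m : ℕ) (φ : Fin m → ℝ),
    ∑ κ : Fin m → Fin L, (((∏ j, lam (κ j)) : ℝ) : ℂ) •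
        phaseSeq N m φ (fun j => M (κ j))
      = phaseSeq N m φ (fun _ => ∑ k, ((lam k : ℝ) : ℂ) • M k) := by
  intro m
  induction m with
  | zero =>
    intro φ
    simp [phaseSeq]
  | succ m ih =>
    intro φ
    rw [← ((Fin.consEquiv (fun _ : Fin (m+1) => Fin L)).sum_comp
      (fun κ => (((∏ j, lam (κ j)) : ℝ) : ℂ) • phaseSeq N (m+1) φ (fun j => M (κ j))))]
    rw [Fintype.sum_prod_type]
    have hg : ∀ (k : Fin L) (κ : Fin m → Fin L),
        (((∏ j, lam (Fin.consEquiv (fun _ : Fin (m+1) => Fin L) (k, κ) j)) : ℝ) : ℂ) •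
          phaseSeq N (m+1) φ (fun j => M (Fin.consEquiv (fun _ : Fin (m+1) => Fin L) (k, κ) j))
        = ((lam k : ℝ) : ℂ) • ((if m % 2 = 0 then phasePlus N (φ 0) * M k
            else phaseMinus N (φ 0) * (M k)ᴴ) *
          ((((∏ j, lam (κ j)) : ℝ) : ℂ) •
            phaseSeq N m (fun j => φ j.succ) (fun j => M (κ j)))) := by
      intro k κ
      simp only [Fin.consEquiv_apply]
      rw [phaseSeq_succ]
      simp only [Fin.cons_zero, Fin.cons_succ, Fin.prod_univ_succ]
      push_cast
      rw [mul_smul_comm, smul_smul]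
    simp only [hg, ← Finset.mul_sum, ← Finset.smul_sum]
    rw [phaseSeq_succ]
    simp only [ih]
    have hassoc : ∀ x : Fin L,
        ((lam x : ℝ) : ℂ) • ((if m % 2 = 0 then phasePlus N (φ 0) * M x
            else phaseMinus N (φ 0) * (M x)ᴴ) *
          phaseSeq N m (fun j => φ j.succ) (fun _ => ∑ k, ((lam k : ℝ) : ℂ) • M k))
        = (((lam x : ℝ) : ℂ) • (if m % 2 = 0 then phasePlus N (φ 0) * M x
            else phaseMinus N (φ 0) * (M x)ᴴ)) *
          phaseSeq N m (fun j => φ j.succ) (fun _ => ∑ k, ((lam k : ℝ) : ℂ) • M k) :=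
      fun x => (smul_mul_assoc _ _ _).symm
    simp only [hassoc]
    rw [← Finset.sum_mul]
    congr 1
    split
    · rw [Matrix.mul_sum]
      refine Finset.sum_congr rfl fun x _ => ?_
      rw [mul_smul_comm]
    · rw [conjTranspose_sum, Matrix.mul_sum]
      refine Finset.sum_congr rfl fun x _ => ?_
      rw [conjTranspose_smul, mul_smul_comm]
      norm_num [Complex.conj_ofReal]

lemma embed_avg (N L : ℕ) (c s : ℝ) (lam : Fin L → ℝ) (hsum : ∑ k, lam k = 1)
    (Hk : Fin L → Matrix (Fin N) (Fin N) ℂ) :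
    ∑ k, ((lam k : ℝ) : ℂ) • embedMat N c s (Hk k)
      = embedMat N c s (∑ k, ((lam k : ℝ) : ℂ) • Hk k) := by
  have h1 : (∑ k, ((lam k : ℝ) : ℂ)) = 1 := by
    rw [← Complex.ofReal_sum, hsum, Complex.ofReal_one]
  unfold embedMat
  ext i j
  rcases i with i | i <;> rcases j with j | j <;>
    simp [Matrix.sum_apply, Matrix.smul_apply, Matrix.one_apply, conjTranspose_sum,
      conjTranspose_smul, Complex.conj_ofReal, ← Finset.sum_mul, h1,
      Finset.mul_sum, mul_left_comm, mul_comm, apply_ite] <;>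
    split_ifs <;> simp_all [← Finset.mul_sum, h1]

lemma sandwich {ι : Type*} [Fintype ι] {n : Type*} [Fintype n] [DecidableEq n]
    (a : ι → ℝ) (P : ι → Matrix n n ℂ) (ρ : Matrix n n ℂ) :
    ∑ κ : ι, ∑ κ' : ι, (((a κ * a κ') : ℝ) : ℂ) • (P κ * ρ * (P κ')ᴴ)
      = (∑ κ, ((a κ : ℝ) : ℂ) • P κ) * ρ * (∑ κ', ((a κ' : ℝ) : ℂ) • P κ')ᴴ := by
  symm
  calc (∑ κ, ((a κ : ℝ) : ℂ) • P κ) * ρ * (∑ κ', ((a κ' : ℝ) : ℂ) • P κ')ᴴ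
      = (∑ κ, (((a κ : ℝ) : ℂ) • P κ) * ρ) * (∑ κ', ((a κ' : ℝ) : ℂ) • (P κ')ᴴ) := by
        rw [Finset.sum_mul, conjTranspose_sum]
        congr 1
        refine Finset.sum_congr rfl fun κ' _ => ?_
        simp [Complex.ext_iff]
    _ = ∑ κ, ∑ κ', ((((a κ : ℝ) : ℂ) • P κ) * ρ) * (((a κ' : ℝ) : ℂ) • (P κ')ᴴ) :=
        Finset.sum_mul_sum _ _ _ _
    _ = ∑ κ : ι, ∑ κ' : ι, (((a κ * a κ') : ℝ) : ℂ) • (P κ * ρ * (P κ')ᴴ) := by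
        refine Finset.sum_congr rfl fun κ _ => Finset.sum_congr rfl fun κ' _ => ?_
        rw [smul_mul_assoc, smul_mul_assoc, mul_smul_comm, smul_smul]
        push_cast
        ring_nf

/-- in the setting of the randomized alternating phase sequences, for every
`Φ ∈ ℝ^m` and every 2N×2N complex matrix `ρ`, averaging over two independent index tuples
yields `Σ_{κ,κ'} (∏_j λ_{κ_j})·(∏_j λ_{κ'_j})·U_Φ^{(κ)}·ρ·(U_Φ^{(κ')})† = U_Φ·ρ·U_Φ†`. -/
theorem stmt3 (N L m : ℕ) (hN : 1 ≤ N) (hL : 1 ≤ L) (hm : 1 ≤ m)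
    (Hk : Fin L → Matrix (Fin N) (Fin N) ℂ)
    (hunit : ∀ k, Hk k ∈ Matrix.unitaryGroup (Fin N) ℂ)
    (lam : Fin L → ℝ) (hlam : ∀ k, 0 ≤ lam k) (hsum : ∑ k, lam k = 1)
    (c s : ℝ) (φ : Fin m → ℝ)
    (ρ : Matrix (Fin N ⊕ Fin N) (Fin N ⊕ Fin N) ℂ) :
    ∑ κ : Fin m → Fin L, ∑ κ' : Fin m → Fin L,
        ((((∏ j, lam (κ j)) * (∏ j, lam (κ' j))) : ℝ) : ℂ) •
          (phaseSeq N m φ (fun j => embedMat N c s (Hk (κ j))) * ρ *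
            (phaseSeq N m φ (fun j => embedMat N c s (Hk (κ' j))))ᴴ)
      = phaseSeq N m φ (fun _ => embedMat N c s (∑ k, ((lam k : ℝ) : ℂ) • Hk k)) * ρ *
          (phaseSeq N m φ (fun _ => embedMat N c s (∑ k, ((lam k : ℝ) : ℂ) • Hk k)))ᴴ := by
  have hkey := key N L lam hsum (fun k => embedMat N c s (Hk k)) m φ
  rw [embed_avg N L c s lam hsum Hk] at hkey
  rw [← hkey]
  rw [conjTranspose_sum]
  simp only [conjTranspose_smul, Complex.star_def, Complex.conj_ofReal,
    Finset.sum_mul, Finset.mul_sum, Finset.smul_sum, smul_mul_assoc, mul_smul_comm,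
    smul_smul, Complex.ofReal_mul]
  rw [Finset.sum_comm]
  refine Finset.sum_congr rfl fun κ _ => Finset.sum_congr rfl fun κ' _ => ?_
  rw [mul_comm]
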